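/- If n ≢ 0 (mod 4), then the n-th cyclotomic polynomial Φ_n(x) is irreducible over ℚ(i); if n ≡ 0 (mod 4) (and n ≥ 4), then Φ_n(x) is reducible over ℚ(i). -/

import Mathlib

open Polynomial

/-- The field `ℚ(i)`, realized as an intermediate field of `ℂ/ℚ`. -/
noncomputable def QI : IntermediateField ℚ ℂ := IntermediateField.adjoin ℚ {Complex.I}

lemma dvd_four {g : ℕ} (h : g ∣ 4) : g = 1 ∨ g = 2 ∨ g = 4 := by
  have h1 : 0 < g := Nat.pos_of_dvd_of_pos h (by norm_num)
  have h2 : g ≤ 4 := Nat.le_of_dvd (by norm_num) h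
  interval_cases g <;> revert h <;> decide

open IntermediateField in
lemma finrank_adjoin_prim {m : ℕ} (hm : 0 < m) {μ : ℂ} (hμ : IsPrimitiveRoot μ m) :
    Module.finrank ℚ ℚ⟮μ⟯ = m.totient := by
  rw [adjoin.finrank ((hμ.isIntegral hm).tower_top (A := ℚ)), ← cyclotomic_eq_minpoly_rat hμ hm,
    natDegree_cyclotomic]

open IntermediateField in
theorem stmt14 (n : ℕ) (hn : 0 < n) :
    (n % 4 ≠ 0 → Irreducible ((Polynomial.cyclotomic n ℤ).map (Int.castRingHom QI))) ∧
    (n % 4 = 0 → ¬ Irreducible ((Polynomial.cyclotomic n ℤ).map (Int.castRingHom QI))) := by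
  rw [show (cyclotomic n ℤ).map (Int.castRingHom QI) = cyclotomic n QI from
    map_cyclotomic_int n QI]
  set m : ℕ := Nat.lcm n 4 with hmdef
  have hn4 : (4 : ℕ) ∣ m := Nat.dvd_lcm_right n 4
  have hnm : n ∣ m := Nat.dvd_lcm_left n 4
  have hm : 0 < m := Nat.pos_of_ne_zero (Nat.lcm_ne_zero hn.ne' (by norm_num))
  obtain ⟨ξ, hξ⟩ : ∃ ξ : ℂ, IsPrimitiveRoot ξ m := ⟨_, Complex.isPrimitiveRoot_exp m hm.ne'⟩
  set ζ : ℂ := ξ ^ (m / n) with hzdef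
  have hζ : IsPrimitiveRoot ζ n := hξ.pow hm (Nat.div_mul_cancel hnm).symm
  set j : ℂ := ξ ^ (m / 4) with hjdef
  have hj : IsPrimitiveRoot j 4 := hξ.pow hm (Nat.div_mul_cancel hn4).symm
  -- j = I or j = -I
  have hj2 : j ^ 2 = -1 := by
    have := (hj.pow (by norm_num : (0:ℕ) < 4) (by norm_num : 4 = 2 * 2)).eq_neg_one_of_two_right
    simpa using this
  have hjI : j = Complex.I ∨ j = -Complex.I := by
    have h0 : (j - Complex.I) * (j + Complex.I) = 0 := by
      have hI : Complex.I ^ 2 = -1 := Complex.I_sq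
      linear_combination hj2 - hI
    rcases mul_eq_zero.1 h0 with h | h
    · left; linear_combination h
    · right; linear_combination h
  -- I ∈ ℚ⟮ξ⟯
  have hxmem : ξ ∈ ℚ⟮ξ⟯ := mem_adjoin_simple_self ℚ ξ
  have hjmem : j ∈ ℚ⟮ξ⟯ := pow_mem hxmem _
  have hImem : Complex.I ∈ ℚ⟮ξ⟯ := by
    rcases hjI with h | h
    · rw [← h]; exact hjmem
    · rw [show Complex.I = -j by rw [h, neg_neg]]; exact neg_mem hjmem
  have hzmem : ζ ∈ ℚ⟮ξ⟯ := pow_mem hxmem _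
  -- coprimality of m/n and m/4
  have hcop : Nat.Coprime (m / n) (m / 4) := by
    have hd0 : 0 < Nat.gcd (m / n) (m / 4) :=
      Nat.gcd_pos_of_pos_left _ (Nat.div_pos (Nat.le_of_dvd hm hnm) hn)
    set d : ℕ := Nat.gcd (m / n) (m / 4) with hddef
    have h1 : n * d ∣ m := by
      obtain ⟨k, hk⟩ := Nat.gcd_dvd_left (m / n) (m / 4)
      exact ⟨k, by rw [mul_assoc, ← hk, Nat.mul_div_cancel' hnm]⟩
    have h2 : 4 * d ∣ m := by
      obtain ⟨k, hk⟩ := Nat.gcd_dvd_right (m / n) (m / 4)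
      exact ⟨k, by rw [mul_assoc, ← hk, Nat.mul_div_cancel' hn4]⟩
    have hdm : d ∣ m := dvd_of_mul_left_dvd h1
    have hn' : n ∣ m / d := (Nat.dvd_div_iff_mul_dvd hdm).2 (by rwa [mul_comm] at h1)
    have h4' : 4 ∣ m / d := (Nat.dvd_div_iff_mul_dvd hdm).2 (by rwa [mul_comm] at h2)
    have hmd : m ∣ m / d := Nat.lcm_dvd hn' h4'
    have hle : m ≤ m / d := Nat.le_of_dvd (Nat.div_pos (Nat.le_of_dvd hm hdm) hd0) hmd
    have : m / d ≤ m / 1 := Nat.div_le_div_left hd0 (by norm_num)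
    have hd1 : d = 1 := by
      by_contra hne
      have : m / d < m := Nat.div_lt_self hm (by omega)
      omega
    exact hd1
  -- ξ ∈ adjoin ℚ {I, ζ}
  have hximem : ξ ∈ IntermediateField.adjoin ℚ ({Complex.I, ζ} : Set ℂ) := by
    set F := IntermediateField.adjoin ℚ ({Complex.I, ζ} : Set ℂ) with hF
    have hIF : Complex.I ∈ F := subset_adjoin _ _ (by simp)
    have hzF : ζ ∈ F := subset_adjoin _ _ (by simp)
    have hjF : j ∈ F := by
      rcases hjI with h | h
      · rw [h]; exact hIF
      · rw [h]; exact neg_mem hIF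
    have key : (ξ : ℂ) = ζ ^ (Nat.gcdA (m / n) (m / 4)) * j ^ (Nat.gcdB (m / n) (m / 4)) := by
      have hb := Nat.gcd_eq_gcd_ab (m / n) (m / 4)
      rw [hcop] at hb
      rw [hzdef, hjdef, ← zpow_natCast ξ (m / n), ← zpow_natCast ξ (m / 4),
        ← zpow_mul, ← zpow_mul, ← zpow_add₀ (hξ.ne_zero hm.ne'), ← hb]
      norm_num
    rw [key]
    exact mul_mem (zpow_mem hzF _) (zpow_mem hjF _)
  -- field equality
  have hfield : IntermediateField.adjoin ℚ ({Complex.I, ζ} : Set ℂ) = ℚ⟮ξ⟯ := by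
    apply le_antisymm
    · rw [adjoin_le_iff]
      rintro x (rfl | rfl)
      · exact hImem
      · exact hzmem
    · rw [adjoin_le_iff]
      rintro x rfl
      exact hximem
  -- I is a primitive 4th root
  have hIprim : IsPrimitiveRoot Complex.I 4 := by
    rcases hjI with h | h
    · rwa [← h]
    · have h3 : IsPrimitiveRoot (j ^ 3) 4 := hj.pow_of_coprime 3 (by norm_num)
      have hj3 : j ^ 3 = Complex.I := by
        rw [h]
        simp [pow_succ, Complex.I_mul_I]
      rwa [hj3] at h3
  have hQI2 : Module.finrank ℚ QI = 2 := by
    have := finrank_adjoin_prim (by norm_num) hIprim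
    rw [show QI = ℚ⟮Complex.I⟯ from rfl, this]
    decide
  -- tower
  have hint : IsIntegral QI ζ := (hζ.isIntegral hn).tower_top
  haveI hfd : FiniteDimensional QI QI⟮ζ⟯ := IntermediateField.adjoin.finiteDimensional hint
  have htower : Module.finrank ℚ QI * Module.finrank QI QI⟮ζ⟯ = m.totient := by
    have h1 : Module.finrank ℚ QI * Module.finrank QI QI⟮ζ⟯
        = Module.finrank ℚ QI⟮ζ⟯ := Module.finrank_mul_finrank ℚ QI QI⟮ζ⟯
    have h2 : (IntermediateField.restrictScalars ℚ QI⟮ζ⟯ : IntermediateField ℚ ℂ)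
        = ℚ⟮ξ⟯ := by
      erw [IntermediateField.restrictScalars_adjoin_eq_sup]
      rw [← hfield,
        show ({Complex.I, ζ} : Set ℂ) = {Complex.I} ∪ {ζ} from rfl,
        IntermediateField.adjoin_union]
      rfl
    have h3 : Module.finrank ℚ QI⟮ζ⟯
        = Module.finrank ℚ (IntermediateField.restrictScalars ℚ QI⟮ζ⟯) := rfl
    rw [h1, h3, h2, finrank_adjoin_prim hm hξ]
  rw [hQI2] at htower
  have hdeg : Module.finrank QI QI⟮ζ⟯ = (minpoly QI ζ).natDegree := adjoin.finrank hint
  -- aeval root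
  have hroot : (Polynomial.aeval ζ) (cyclotomic n QI) = 0 := by
    rw [aeval_def, eval₂_eq_eval_map, map_cyclotomic]
    exact hζ.isRoot_cyclotomic hn
  constructor
  · intro h4
    -- totient m = 2 * totient n
    have htot : m.totient = 2 * n.totient := by
      have hkey := Nat.totient_gcd_mul_totient_mul n 4
      have hgl : Nat.gcd n 4 * m = n * 4 := Nat.gcd_mul_lcm n 4
      have hgdvd : Nat.gcd n 4 ∣ 4 := Nat.gcd_dvd_right n 4
      have hgval : Nat.gcd n 4 = 1 ∨ Nat.gcd n 4 = 2 := by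
        have h44 : Nat.gcd n 4 ≠ 4 := by
          intro hc
          have : (4 : ℕ) ∣ n := hc ▸ Nat.gcd_dvd_left n 4
          omega
        rcases dvd_four hgdvd with h | h | h
        · exact Or.inl h
        · exact Or.inr h
        · exact absurd h h44
      have h42 : Nat.totient 4 = 2 := by decide
      rcases hgval with hg | hg
      · rw [hg] at hgl hkey
        rw [Nat.totient_one, one_mul, mul_one, h42] at hkey
        have : m = n * 4 := by omega
        rw [this, hkey]
        ring
      · rw [hg] at hgl hkey
        rw [Nat.totient_two, one_mul, h42] at hkey
        have hm2n : m = 2 * n := by omega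
        have hkey2 : Nat.totient (2 * (2 * n)) = 2 * Nat.totient (2 * n) :=
          Nat.totient_mul_of_prime_of_dvd Nat.prime_two ⟨n, rfl⟩
        have : n * 4 = 2 * (2 * n) := by ring
        rw [this, hkey2] at hkey
        rw [hm2n]
        omega
    rw [htot] at htower
    have hdeg2 : (minpoly QI ζ).natDegree = n.totient := by rw [← hdeg]; omega
    -- minpoly QI ζ = cyclotomic n QI
    have hdvd : minpoly QI ζ ∣ cyclotomic n QI := minpoly.dvd QI ζ hroot
    obtain ⟨c, hc⟩ := hdvd
    have hmon : (minpoly QI ζ).Monic := minpoly.monic hint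
    have hcyc_mon : (cyclotomic n QI).Monic := cyclotomic.monic n QI
    have hc0 : c ≠ 0 := by
      rintro rfl
      rw [mul_zero] at hc
      exact (cyclotomic_ne_zero n QI) hc
    have hdegc : c.natDegree = 0 := by
      have := natDegree_mul hmon.ne_zero hc0
      rw [← hc, natDegree_cyclotomic, hdeg2] at this
      omega
    have hcmon : c.Monic := by
      have := hcyc_mon
      rw [hc] at this
      exact hmon.of_mul_monic_left this
    have hc1 : c = 1 := hcmon.natDegree_eq_zero.1 hdegc
    rw [hc1, mul_one] at hc
    rw [hc]
    exact minpoly.irreducible hint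
  · intro h4
    intro hirr
    have heq : minpoly QI ζ = cyclotomic n QI :=
      (minpoly.eq_of_irreducible_of_monic hirr hroot (cyclotomic.monic n QI)).symm
    have hdeg2 : (minpoly QI ζ).natDegree = n.totient := by
      rw [heq, natDegree_cyclotomic]
    have hmn : m = n := by
      have : m ∣ n := Nat.lcm_dvd dvd_rfl (Nat.dvd_of_mod_eq_zero h4)
      exact Nat.dvd_antisymm this hnm
    rw [hmn, hdeg, hdeg2] at htower
    have : 0 < n.totient := Nat.totient_pos.2 hn
    omega
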